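/- Let 1 ≤ d ≤ 2(q−1) and d^⊥ = 2(q²−1)−d. Let f = Σ λ_{a₁,a₂} x₁^{a₁}x₂^{a₂}, where the sum runs over all pairs (a₁,a₂) with a₁ > 0, a₁+a₂ = d, 0 ≤ a₂ ≤ q²−1, and λ_{a₁,a₂} ∈ F_{q²}. Set T_f = {a₂ : λ_{d−a₂,a₂} ≠ 0}. Then ev(f) ∈ (PRM_{d^⊥}(q²,2))^q if and only if d ≡ 0 (mod q−1) or T_f ⊆ T. -/

import Mathlib

open MvPolynomial

/-- The fixed representatives of the points of the projective plane over `F`: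
the leftmost nonzero coordinate equals 1. -/
def stdRep (F : Type*) [Field F] : Set (Fin 3 → F) :=
  {v | v 0 = 1 ∨ (v 0 = 0 ∧ v 1 = 1) ∨ (v 0 = 0 ∧ v 1 = 0 ∧ v 2 = 1)}

/-- The evaluation map at the fixed representatives. -/
noncomputable def ev (F : Type*) [Field F] :
    MvPolynomial (Fin 3) F →ₗ[F] (stdRep F → F) :=
  LinearMap.pi fun Q => (aeval (Q : Fin 3 → F)).toLinearMap

/-- The projective Reed–Muller code of degree `d` over the projective plane. -/
noncomputable def PRM (F : Type*) [Field F] (d : ℕ) : Submodule F (stdRep F → F) :=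
  (homogeneousSubmodule (Fin 3) F d).map (ev F)

/-- The componentwise `q`-th power of a set of vectors. -/
def powq {F : Type*} [Field F] (q : ℕ) (Cset : Set (stdRep F → F)) :
    Set (stdRep F → F) :=
  {v | ∃ w ∈ Cset, v = fun i => (w i) ^ q}

/-- `ob N z` is the representative `z̄` of `z` modulo `N−1`: it satisfies
`1 ≤ z̄ ≤ N−1` and `z̄ ≡ z (mod N−1)` if `z > 0`, and `z̄ = 0` if `z = 0`. -/
def ob (N z : ℕ) : ℕ := if z = 0 then 0 else (z - 1) % (N - 1) + 1


section Stmt12Aux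

open Finset

lemma modEq_of_add_eq {n a b c : ℕ} (h1 : n ∣ a + c) (h2 : n ∣ b + c) : a ≡ b [MOD n] :=
  ((Nat.modEq_zero_iff_dvd.mpr h1).trans (Nat.modEq_zero_iff_dvd.mpr h2).symm).add_right_cancel' c

lemma dvd_of_modEq {n a b : ℕ} (h : a ≡ b [MOD n]) (hb : n ∣ b) : n ∣ a :=
  Nat.modEq_zero_iff_dvd.mp (h.trans (Nat.modEq_zero_iff_dvd.mpr hb))

section ObLemmas

lemma ob_zero (N : ℕ) : ob N 0 = 0 := rfl

lemma ob_pos {N z : ℕ} (hz : 1 ≤ z) : 1 ≤ ob N z := by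
  unfold ob; rw [if_neg (by omega)]; omega

lemma ob_le {N z : ℕ} (hN : 2 ≤ N) : ob N z ≤ N - 1 := by
  unfold ob
  split
  · omega
  · have := Nat.mod_lt (z - 1) (show 0 < N - 1 by omega)
    omega

lemma ob_modEq (N z : ℕ) : ob N z ≡ z [MOD N - 1] := by
  unfold ob
  split
  · subst ‹z = 0›; rfl
  · have h1 : (z - 1) % (N - 1) ≡ z - 1 [MOD N - 1] := Nat.mod_modEq _ _
    have h2 := h1.add_right 1
    rwa [Nat.sub_add_cancel (by omega)] at h2

lemma ob_eq_self {N z : ℕ} (h1 : 1 ≤ z) (h2 : z ≤ N - 1) (hN : 2 ≤ N) : ob N z = z := by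
  unfold ob; rw [if_neg (by omega), Nat.mod_eq_of_lt (by omega)]; omega

lemma eq_of_dvd_lt {N m : ℕ} (h : N ∣ m) (h1 : 1 ≤ m) (h2 : m < 2 * N) : m = N := by
  obtain ⟨k, hk⟩ := h
  have h0 : k ≠ 0 := by rintro rfl; simp at hk; omega
  have hlt : k < 2 := by
    by_contra hc
    push_neg at hc
    have : N * 2 ≤ N * k := Nat.mul_le_mul_left N hc
    omega
  have : k = 1 := by omega
  subst this
  rw [Nat.mul_one] at hk
  omega

lemma cancel_q {q N a b : ℕ} (hN : N = q ^ 2 - 1) (hq : 1 ≤ q)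
    (h : q * a ≡ q * b [MOD N]) : a ≡ b [MOD N] := by
  have h2 := h.mul_left q
  have e : ∀ x : ℕ, q * (q * x) = N * x + x := by
    intro x
    have h1 : 1 ≤ q ^ 2 := Nat.one_le_pow _ _ (by omega)
    have e1 : q * (q * x) = q ^ 2 * x := by ring
    rw [e1, hN]
    have e2 : (q ^ 2 - 1) * x + x = (q ^ 2 - 1 + 1) * x := by ring
    rw [e2, Nat.sub_add_cancel h1]
  rw [e, e] at h2
  have l : ∀ x : ℕ, N * x + x ≡ x [MOD N] := by
    intro x
    have : N * x ≡ 0 [MOD N] := Nat.modEq_zero_iff_dvd.mpr ⟨x, rfl⟩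
    simpa using this.add_right x
  exact (l a).symm.trans (h2.trans (l b))

lemma qsq_factor {q : ℕ} (hq : 1 ≤ q) : (q + 1) * (q - 1) = q ^ 2 - 1 := by
  obtain ⟨t, rfl⟩ : ∃ t, q = t + 1 := ⟨q - 1, by omega⟩
  have h1 : (t + 1) ^ 2 = t * t + 2 * t + 1 := by ring
  have h2 : (t + 1 + 1) * (t + 1 - 1) = t * t + 2 * t := by
    rw [Nat.add_sub_cancel]; ring
  omega

end ObLemmas

section FieldLemmas
variable {F : Type*} [Field F] [Fintype F]

lemma fpow_mod (t : F) (ht : t ≠ 0) (m : ℕ) :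
    t ^ m = t ^ (m % (Fintype.card F - 1)) := by
  conv_lhs => rw [← Nat.mod_add_div m (Fintype.card F - 1)]
  rw [pow_add, pow_mul, FiniteField.pow_card_sub_one_eq_one t ht, one_pow, mul_one]

lemma pow_reduce {m m' : ℕ} (t : F) (hm : 1 ≤ m) (hm' : 1 ≤ m')
    (h : m ≡ m' [MOD Fintype.card F - 1]) : t ^ m = t ^ m' := by
  by_cases ht : t = 0
  · subst ht; rw [zero_pow (by omega), zero_pow (by omega)]
  · rw [fpow_mod t ht m, fpow_mod t ht m', h]

lemma sum_pow_not_dvd {m : ℕ} (hm : ¬ (Fintype.card F - 1) ∣ m) :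
    ∑ t : F, t ^ m = 0 := by
  have hc : 1 < Fintype.card F := Fintype.one_lt_card
  have hmod : m % (Fintype.card F - 1) ≠ 0 := fun h => hm (Nat.dvd_of_mod_eq_zero h)
  have hstep : ∀ t : F, t ^ m = t ^ (m % (Fintype.card F - 1)) := by
    intro t
    by_cases ht : t = 0
    · subst ht
      rw [zero_pow (fun h => hm (by simp [h])), zero_pow hmod]
    · exact fpow_mod t ht m
  rw [Finset.sum_congr rfl fun t _ => hstep t]
  exact FiniteField.sum_pow_lt_card_sub_one F _ (Nat.mod_lt _ (by omega))

lemma sum_pow_dvd {m : ℕ} (hm : 1 ≤ m) (h : (Fintype.card F - 1) ∣ m) :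
    ∑ t : F, t ^ m = -1 := by
  classical
  have step : ∀ t : F, t ^ m = 1 - (if t = 0 then (1:F) else 0) := by
    intro t
    by_cases ht : t = 0
    · subst ht; rw [zero_pow (by omega), if_pos rfl, sub_self]
    · obtain ⟨k, hk⟩ := h
      rw [hk, pow_mul, FiniteField.pow_card_sub_one_eq_one t ht, one_pow, if_neg ht, sub_zero]
  rw [Finset.sum_congr rfl fun t _ => step t, Finset.sum_sub_distrib]
  rw [Finset.sum_ite_eq' Finset.univ (0 : F) (fun _ => (1:F))]
  simp only [Finset.mem_univ, if_true, Finset.sum_const, Finset.card_univ, nsmul_eq_mul, mul_one]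
  rw [FiniteField.cast_card_eq_zero, zero_sub]

lemma exists_pow_hom (q : ℕ) (hq : Fintype.card F = q ^ 2) :
    ∃ φ : F →+* F, ∀ x : F, φ x = x ^ q := by
  have : CharP F (ringChar F) := ringChar.charP F
  obtain ⟨n, hp, hcard⟩ := FiniteField.card F (ringChar F)
  haveI : Fact (ringChar F).Prime := ⟨hp⟩
  have hdvd : q ∣ ringChar F ^ (n : ℕ) := by
    rw [← hcard, hq]; exact Dvd.intro_left q (by ring)
  obtain ⟨k, _, hqk⟩ := (Nat.dvd_prime_pow hp).mp hdvd
  exact ⟨iterateFrobenius F (ringChar F) k, fun x => by rw [iterateFrobenius_def, ← hqk]⟩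

lemma weight_one_fin3 (m : Fin 3 →₀ ℕ) : (Finsupp.weight 1) m = m 0 + m 1 + m 2 := by
  rw [show (Finsupp.weight (1 : Fin 3 → ℕ)) = Finsupp.weight (fun _ => 1) from rfl,
    ← Finsupp.degree_eq_weight_one]
  rw [Finsupp.degree_apply]
  rw [Finset.sum_subset (Finset.subset_univ m.support)
    (fun i _ h => Finsupp.notMem_support_iff.mp h)]
  exact Fin.sum_univ_three m

end FieldLemmas

section Plumbing
variable {F : Type*} [Field F] [Fintype F]

lemma ev_apply (f : MvPolynomial (Fin 3) F) (Q : stdRep F) :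
    ev F f Q = eval (Q : Fin 3 → F) f := by
  simp [ev, aeval_def, Algebra.algebraMap_self, eval₂_id]

lemma memb_iff (q : ℕ) (hq : Fintype.card F = q ^ 2) (D : ℕ) (f : MvPolynomial (Fin 3) F) :
    ev F f ∈ powq q (PRM F D : Set (stdRep F → F)) ↔
      ∃ g : MvPolynomial (Fin 3) F, g.IsHomogeneous D ∧
        ∀ Q : stdRep F, eval (Q : Fin 3 → F) g = (eval (Q : Fin 3 → F) f) ^ q := by
  have key : ∀ x : F, (x ^ q) ^ q = x := by
    intro x
    rw [← pow_mul, ← sq, ← hq, FiniteField.pow_card]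
  constructor
  · rintro ⟨w, hw, hfw⟩
    rw [SetLike.mem_coe, PRM, Submodule.mem_map] at hw
    obtain ⟨g, hg, rfl⟩ := hw
    refine ⟨g, (mem_homogeneousSubmodule _ _).mp hg, fun Q => ?_⟩
    have h1 := congrFun hfw Q
    rw [ev_apply] at h1
    rw [← ev_apply, ← key (ev F g Q), ← h1]
  · rintro ⟨g, hg, hgf⟩
    refine ⟨ev F g, ?_, funext fun Q => ?_⟩
    · rw [SetLike.mem_coe, PRM, Submodule.mem_map]
      exact ⟨g, (mem_homogeneousSubmodule _ _).mpr hg, rfl⟩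
    · rw [ev_apply, ev_apply, ← key (eval (Q : Fin 3 → F) f), hgf Q]

lemma sufficiency (q d : ℕ) (hq : Fintype.card F = q ^ 2) (hq2 : 2 ≤ q) (h1 : 1 ≤ d)
    (h2 : d ≤ 2 * (q - 1)) (lam : ℕ → F) (f : MvPolynomial (Fin 3) F)
    (hf : f = ∑ a₂ ∈ (Finset.range (q ^ 2)).filter (fun a₂ => a₂ < d),
        C (lam a₂) * X 1 ^ (d - a₂) * X 2 ^ a₂)
    (hcase : (q - 1) ∣ d ∨ ∀ a₂, a₂ ≤ q ^ 2 - 1 → a₂ < d → lam a₂ ≠ 0 →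
        ob (q ^ 2) (q * a₂) + (q ^ 2 - 1) < 2 * (q ^ 2 - 1) - d) :
    ∃ g : MvPolynomial (Fin 3) F, g.IsHomogeneous (2 * (q ^ 2 - 1) - d) ∧
      ∀ Q : stdRep F, eval (Q : Fin 3 → F) g = (eval (Q : Fin 3 → F) f) ^ q := by
  classical
  have hq4 : 4 ≤ q ^ 2 := by nlinarith
  have h2q : 2 * q ≤ q ^ 2 := by nlinarith
  set M : ℕ := q ^ 2 - 1 with hM
  set D : ℕ := 2 * M - d with hD
  set s : Finset ℕ := (Finset.range (q ^ 2)).filter (fun a₂ => a₂ < d) with hs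
  have hcard : Fintype.card F - 1 = M := by rw [hq]
  obtain ⟨φ, hφ⟩ := exists_pow_hom q hq
  -- expansion of (eval v f) ^ q
  have hfq : ∀ v : Fin 3 → F, (eval v f) ^ q
      = ∑ a₂ ∈ s, (lam a₂) ^ q * (v 1 ^ (q * (d - a₂)) * v 2 ^ (q * a₂)) := by
    intro v
    rw [hf, ← hφ, map_sum, map_sum]
    refine Finset.sum_congr rfl fun a₂ _ => ?_
    rw [eval_mul, eval_mul, eval_C, eval_pow, eval_pow, eval_X, eval_X]
    rw [map_mul, map_mul, hφ, hφ, hφ]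
    rw [← pow_mul, ← pow_mul, mul_comm (d - a₂) q, mul_comm a₂ q, mul_assoc]
  -- per-index data
  have hMdvd : (q - 1) ∣ d → M ∣ d * (q + 1) := by
    intro hd
    obtain ⟨t, ht⟩ := hd
    exact ⟨t, by
      calc d * (q + 1) = ((q + 1) * (q - 1)) * t := by rw [ht]; ring
        _ = M * t := by rw [qsq_factor (by omega), ← hM]⟩
  -- component facts used repeatedly
  have obβ : ∀ a₂ : ℕ, ob (q ^ 2) (q * a₂) ≤ M ∧ ob (q ^ 2) (q * a₂) ≡ q * a₂ [MOD M] := by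
    intro a₂
    constructor
    · have := ob_le (N := q ^ 2) (z := q * a₂) (by omega); omega
    · have := ob_modEq (q ^ 2) (q * a₂); simpa using this
  rcases hcase with hd | hsub
  · -- case d ≡ 0 mod q-1
    refine ⟨∑ a₂ ∈ s, C ((lam a₂) ^ q) *
      (X 1 ^ (D - ob (q ^ 2) (q * a₂)) * X 2 ^ (ob (q ^ 2) (q * a₂))), ?_, ?_⟩
    · refine IsHomogeneous.sum _ _ _ fun a₂ ha₂ => ?_
      have hamem : a₂ < d := (Finset.mem_filter.mp ha₂).2
      refine IsHomogeneous.C_mul ?_ _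
      have hle : ob (q ^ 2) (q * a₂) ≤ M := (obβ a₂).1
      have := ((isHomogeneous_X_pow (R := F) (1 : Fin 3) (D - ob (q ^ 2) (q * a₂))).mul
        (isHomogeneous_X_pow (R := F) (2 : Fin 3) (ob (q ^ 2) (q * a₂))))
      have he : D - ob (q ^ 2) (q * a₂) + ob (q ^ 2) (q * a₂) = D := by omega
      rwa [he] at this
    · intro Q
      rw [map_sum, hfq]
      refine Finset.sum_congr rfl fun a₂ ha₂ => ?_
      have hamem : a₂ < d := (Finset.mem_filter.mp ha₂).2
      rw [eval_mul, eval_mul, eval_C, eval_pow, eval_pow, eval_X, eval_X]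
      congr 1
      -- now the three shapes
      set β : ℕ := ob (q ^ 2) (q * a₂) with hβ
      obtain ⟨hβN, hβmod⟩ := obβ a₂
      have hsplit : q * (d - a₂) + q * a₂ = q * d := by
        rw [← Nat.mul_add, Nat.sub_add_cancel hamem.le]
      have hda : 1 ≤ q * (d - a₂) := Nat.mul_pos (by omega) (by omega)
      have hcong1 : D - β ≡ q * (d - a₂) [MOD M] := by
        refine modEq_of_add_eq (c := β + d) ⟨2, by omega⟩ ?_
        refine dvd_of_modEq (b := q * (d - a₂) + (q * a₂ + d)) ?_ ?_
        · exact Nat.ModEq.add_left _ (Nat.ModEq.add_right _ hβmod)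
        · have e3 : q * (d - a₂) + (q * a₂ + d) = d * (q + 1) := by
            rw [← Nat.add_assoc, hsplit]; ring
          rw [e3]; exact hMdvd hd
      have e2 : (Q : Fin 3 → F) 2 ^ β = (Q : Fin 3 → F) 2 ^ (q * a₂) := by
        rcases Nat.eq_zero_or_pos a₂ with rfl | hpos
        · simp [hβ, ob]
        · exact pow_reduce _ (by
            have := ob_pos (N := q ^ 2) (z := q * a₂) (Nat.mul_pos (by omega) hpos)
            omega) (Nat.mul_pos (by omega) hpos) (by rw [hcard]; exact hβmod)
      obtain h0 | ⟨h0, h1'⟩ | ⟨h0, h1', h2'⟩ := Q.2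
      · have e1 : (Q : Fin 3 → F) 1 ^ (D - β) = (Q : Fin 3 → F) 1 ^ (q * (d - a₂)) :=
          pow_reduce _ (by omega) (by omega) (by rw [hcard]; exact hcong1)
        rw [e1, e2]
      · rw [h1', one_pow, one_pow, e2]
      · rw [h1', zero_pow (by omega), zero_pow (by omega), zero_mul, zero_mul]
  · -- case T_f ⊆ T
    set G : ℕ → MvPolynomial (Fin 3) F := fun a₂ =>
      if a₂ = 0 then
        X 0 ^ (D - ob (q ^ 2) (q * d)) * X 1 ^ (ob (q ^ 2) (q * d))
          + X 1 ^ D - X 0 ^ M * X 1 ^ (D - M)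
      else if ob (q ^ 2) (q * a₂) + M < D then
        X 0 ^ (D - ob (q ^ 2) (q * (d - a₂)) - ob (q ^ 2) (q * a₂))
            * X 1 ^ (ob (q ^ 2) (q * (d - a₂))) * X 2 ^ (ob (q ^ 2) (q * a₂))
          + X 1 ^ (D - ob (q ^ 2) (q * a₂) - M) * X 2 ^ (ob (q ^ 2) (q * a₂) + M)
          - X 0 ^ M * X 1 ^ (D - ob (q ^ 2) (q * a₂) - M) * X 2 ^ (ob (q ^ 2) (q * a₂))
      else 0 with hG
    have hGhom : ∀ a₂, (G a₂).IsHomogeneous D := by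
      intro a₂
      simp only [hG]
      split
      · -- a₂ = 0 branch
        have hle : ob (q ^ 2) (q * d) ≤ M := (obβ d).1
        refine IsHomogeneous.sub (IsHomogeneous.add ?_ ?_) ?_
        · have := ((isHomogeneous_X_pow (R := F) (0 : Fin 3) (D - ob (q ^ 2) (q * d))).mul
            (isHomogeneous_X_pow (R := F) (1 : Fin 3) (ob (q ^ 2) (q * d))))
          rwa [show D - ob (q ^ 2) (q * d) + ob (q ^ 2) (q * d) = D by omega] at this
        · exact isHomogeneous_X_pow _ _
        · have := ((isHomogeneous_X_pow (R := F) (0 : Fin 3) M).mul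
            (isHomogeneous_X_pow (R := F) (1 : Fin 3) (D - M)))
          rwa [show M + (D - M) = D by omega] at this
      · split
        · next hne hT =>
          have hβle : ob (q ^ 2) (q * a₂) ≤ M := (obβ a₂).1
          have hαle : ob (q ^ 2) (q * (d - a₂)) ≤ M := (obβ (d - a₂)).1
          refine IsHomogeneous.sub (IsHomogeneous.add ?_ ?_) ?_
          · have := (((isHomogeneous_X_pow (R := F) (0 : Fin 3)
              (D - ob (q ^ 2) (q * (d - a₂)) - ob (q ^ 2) (q * a₂))).mul
              (isHomogeneous_X_pow (R := F) (1 : Fin 3) (ob (q ^ 2) (q * (d - a₂))))).mul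
              (isHomogeneous_X_pow (R := F) (2 : Fin 3) (ob (q ^ 2) (q * a₂))))
            rwa [show D - ob (q ^ 2) (q * (d - a₂)) - ob (q ^ 2) (q * a₂)
              + ob (q ^ 2) (q * (d - a₂)) + ob (q ^ 2) (q * a₂) = D by omega] at this
          · have := ((isHomogeneous_X_pow (R := F) (1 : Fin 3) (D - ob (q ^ 2) (q * a₂) - M)).mul
              (isHomogeneous_X_pow (R := F) (2 : Fin 3) (ob (q ^ 2) (q * a₂) + M)))
            rwa [show D - ob (q ^ 2) (q * a₂) - M + (ob (q ^ 2) (q * a₂) + M) = D by omega] at this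
          · have := (((isHomogeneous_X_pow (R := F) (0 : Fin 3) M).mul
              (isHomogeneous_X_pow (R := F) (1 : Fin 3) (D - ob (q ^ 2) (q * a₂) - M))).mul
              (isHomogeneous_X_pow (R := F) (2 : Fin 3) (ob (q ^ 2) (q * a₂))))
            rwa [show M + (D - ob (q ^ 2) (q * a₂) - M) + ob (q ^ 2) (q * a₂) = D by omega] at this
        · exact isHomogeneous_zero _ _ _
    refine ⟨∑ a₂ ∈ s, C ((lam a₂) ^ q) * G a₂, ?_, ?_⟩
    · exact IsHomogeneous.sum _ _ _ fun a₂ _ => (hGhom a₂).C_mul _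
    · intro Q
      rw [map_sum, hfq]
      refine Finset.sum_congr rfl fun a₂ ha₂ => ?_
      have hamem : a₂ < d := (Finset.mem_filter.mp ha₂).2
      rw [eval_mul, eval_C]
      by_cases hl : lam a₂ = 0
      · rw [hl, zero_pow (by omega), zero_mul, zero_mul]
      have hT' : a₂ = 0 ∨ ob (q ^ 2) (q * a₂) + M < D := by
        rcases Nat.eq_zero_or_pos a₂ with rfl | hpos
        · left; rfl
        · right; exact hsub a₂ (by omega) hamem hl
      congr 1
      obtain ⟨hβN, hβmod⟩ := obβ a₂
      have hsplit : q * (d - a₂) + q * a₂ = q * d := by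
        rw [← Nat.mul_add, Nat.sub_add_cancel hamem.le]
      have hda : 1 ≤ q * (d - a₂) := Nat.mul_pos (by omega) (by omega)
      have hT'' : a₂ = 0 ∨ (1 ≤ a₂ ∧ ob (q ^ 2) (q * a₂) + M < D) := by
        rcases hT' with h | h
        · exact Or.inl h
        · rcases Nat.eq_zero_or_pos a₂ with rfl | hpos
          · exact Or.inl rfl
          · exact Or.inr ⟨hpos, h⟩
      clear hT'
      rcases hT'' with rfl | ⟨hpos, hT⟩
      · -- a₂ = 0
        simp only [hG, if_true]
        obtain ⟨hαN, hαmod⟩ := obβ d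
        have hqd1 : 1 ≤ q * d := Nat.mul_pos (by omega) (by omega)
        have hα1 : 1 ≤ ob (q ^ 2) (q * d) := ob_pos hqd1
        have hDmod : D ≡ D - M [MOD M] := by
          have e1 : M ≡ 0 [MOD M] := Nat.modEq_zero_iff_dvd.mpr dvd_rfl
          have e2 : (D - M) + M ≡ (D - M) + 0 [MOD M] := Nat.ModEq.add_left _ e1
          rw [show D - M + M = D by omega, Nat.add_zero] at e2
          exact e2
        simp only [Nat.sub_zero, Nat.mul_zero, pow_zero, mul_one,
          eval_add, eval_sub, eval_mul, eval_pow, eval_X]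
        obtain h0 | ⟨h0, h1'⟩ | ⟨h0, h1', h2'⟩ := Q.2
        · simp only [h0, one_pow, one_mul]
          have eD : (Q : Fin 3 → F) 1 ^ D = (Q : Fin 3 → F) 1 ^ (D - M) :=
            pow_reduce _ (by omega) (by omega) (by rw [hcard]; exact hDmod)
          rw [eD, add_sub_cancel_right]
          exact pow_reduce _ (by omega) hqd1 (by rw [hcard]; exact hαmod)
        · simp only [h0, h1', one_pow, mul_one,
            zero_pow (show D - ob (q ^ 2) (q * d) ≠ 0 by omega),
            zero_pow (show M ≠ 0 by omega), zero_mul, zero_add, sub_zero]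
        · simp only [h0, h1', one_pow, mul_one,
            zero_pow (show D - ob (q ^ 2) (q * d) ≠ 0 by omega),
            zero_pow (show M ≠ 0 by omega),
            zero_pow (show ob (q ^ 2) (q * d) ≠ 0 by omega),
            zero_pow (show D ≠ 0 by omega),
            zero_pow (show q * d ≠ 0 by omega),
            zero_mul, mul_zero, zero_add, sub_zero]
      · -- 1 ≤ a₂ and hT
        simp only [hG]
        rw [if_neg (show ¬ a₂ = 0 by omega), if_pos hT]
        obtain ⟨hαN, hαmod⟩ := obβ (d - a₂)
        have hβ1 : 1 ≤ ob (q ^ 2) (q * a₂) := ob_pos (Nat.mul_pos (by omega) hpos)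
        have hα1 : 1 ≤ ob (q ^ 2) (q * (d - a₂)) := ob_pos hda
        have hqa1 : 1 ≤ q * a₂ := Nat.mul_pos (by omega) hpos
        have hβMmod : ob (q ^ 2) (q * a₂) + M ≡ ob (q ^ 2) (q * a₂) [MOD M] := by
          have e1 : M ≡ 0 [MOD M] := Nat.modEq_zero_iff_dvd.mpr dvd_rfl
          have e2 := Nat.ModEq.add_left (ob (q ^ 2) (q * a₂)) e1
          rwa [Nat.add_zero] at e2
        simp only [eval_add, eval_sub, eval_mul, eval_pow, eval_X]
        obtain h0 | ⟨h0, h1'⟩ | ⟨h0, h1', h2'⟩ := Q.2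
        · simp only [h0, one_pow, one_mul]
          have e2M : (Q : Fin 3 → F) 2 ^ (ob (q ^ 2) (q * a₂) + M)
              = (Q : Fin 3 → F) 2 ^ (ob (q ^ 2) (q * a₂)) :=
            pow_reduce _ (by omega) (by omega) (by rw [hcard]; exact hβMmod)
          rw [e2M, add_sub_cancel_right]
          have eα : (Q : Fin 3 → F) 1 ^ (ob (q ^ 2) (q * (d - a₂)))
              = (Q : Fin 3 → F) 1 ^ (q * (d - a₂)) :=
            pow_reduce _ (by omega) (by omega) (by rw [hcard]; exact hαmod)
          have eβ : (Q : Fin 3 → F) 2 ^ (ob (q ^ 2) (q * a₂))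
              = (Q : Fin 3 → F) 2 ^ (q * a₂) :=
            pow_reduce _ (by omega) (by omega) (by rw [hcard]; exact hβmod)
          rw [eα, eβ]
        · have e2M : (Q : Fin 3 → F) 2 ^ (ob (q ^ 2) (q * a₂) + M)
              = (Q : Fin 3 → F) 2 ^ (q * a₂) :=
            pow_reduce _ (by omega) (by omega)
              (by rw [hcard]; exact hβMmod.trans hβmod)
          simp only [h0, h1', one_pow, one_mul,
            zero_pow (show D - ob (q ^ 2) (q * (d - a₂)) - ob (q ^ 2) (q * a₂) ≠ 0 by omega),
            zero_pow (show M ≠ 0 by omega), zero_mul, zero_add, sub_zero]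
          exact e2M
        · simp only [h0, h1', h2', one_pow, mul_one,
            zero_pow (show D - ob (q ^ 2) (q * (d - a₂)) - ob (q ^ 2) (q * a₂) ≠ 0 by omega),
            zero_pow (show M ≠ 0 by omega),
            zero_pow (show ob (q ^ 2) (q * (d - a₂)) ≠ 0 by omega),
            zero_pow (show D - ob (q ^ 2) (q * a₂) - M ≠ 0 by omega),
            zero_pow (show q * (d - a₂) ≠ 0 by omega),
            zero_mul, mul_zero, zero_add, sub_zero]

lemma necessity (q d : ℕ) (hq : Fintype.card F = q ^ 2) (hq2 : 2 ≤ q) (h1 : 1 ≤ d)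
    (h2 : d ≤ 2 * (q - 1)) (lam : ℕ → F) (f : MvPolynomial (Fin 3) F)
    (hf : f = ∑ a₂ ∈ (Finset.range (q ^ 2)).filter (fun a₂ => a₂ < d),
        C (lam a₂) * X 1 ^ (d - a₂) * X 2 ^ a₂)
    (hd : ¬ (q - 1) ∣ d)
    (a' : ℕ) (ha'd : a' < d) (hl : lam a' ≠ 0)
    (hnT : ¬ (ob (q ^ 2) (q * a') + (q ^ 2 - 1) < 2 * (q ^ 2 - 1) - d))
    (g : MvPolynomial (Fin 3) F) (hg : g.IsHomogeneous (2 * (q ^ 2 - 1) - d))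
    (hev : ∀ Q : stdRep F, eval (Q : Fin 3 → F) g = (eval (Q : Fin 3 → F) f) ^ q) : False := by
  classical
  have hq4 : 4 ≤ q ^ 2 := by nlinarith
  have h2q : 2 * q ≤ q ^ 2 := by nlinarith
  have hqq : q * q = q ^ 2 := by ring
  set M : ℕ := q ^ 2 - 1 with hM
  set D : ℕ := 2 * M - d with hD
  set s : Finset ℕ := (Finset.range (q ^ 2)).filter (fun a₂ => a₂ < d) with hs
  have hcard : Fintype.card F - 1 = M := by rw [hq]
  obtain ⟨φ, hφ⟩ := exists_pow_hom q hq
  have hfq : ∀ v : Fin 3 → F, (eval v f) ^ q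
      = ∑ a₂ ∈ s, (lam a₂) ^ q * (v 1 ^ (q * (d - a₂)) * v 2 ^ (q * a₂)) := by
    intro v
    rw [hf, ← hφ, map_sum, map_sum]
    refine Finset.sum_congr rfl fun a₂ _ => ?_
    rw [eval_mul, eval_mul, eval_C, eval_pow, eval_pow, eval_X, eval_X]
    rw [map_mul, map_mul, hφ, hφ, hφ]
    rw [← pow_mul, ← pow_mul, mul_comm (d - a₂) q, mul_comm a₂ q, mul_assoc]
  -- wrappers for power sums
  have sumd : ∀ {m : ℕ}, 1 ≤ m → M ∣ m → (∑ t : F, t ^ m) = -1 := fun h1 h2 =>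
    sum_pow_dvd h1 (by rw [hcard]; exact h2)
  have sumn : ∀ {m : ℕ}, ¬ M ∣ m → (∑ t : F, t ^ m) = 0 := fun h =>
    sum_pow_not_dvd (by rw [hcard]; exact h)
  -- basic facts on a', β'
  have ha'pos : 1 ≤ a' := by
    rcases Nat.eq_zero_or_pos a' with rfl | hpos
    · exfalso; apply hnT; simp only [Nat.mul_zero]
      have : ob (q ^ 2) 0 = 0 := rfl
      rw [this]; omega
    · exact hpos
  have hqa1 : 1 ≤ q * a' := Nat.mul_pos (by omega) ha'pos
  set β : ℕ := ob (q ^ 2) (q * a') with hβ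
  have hβN : β ≤ M := by have := ob_le (N := q ^ 2) (z := q * a') (by omega); omega
  have hβmod : β ≡ q * a' [MOD M] := by have := ob_modEq (q ^ 2) (q * a'); simpa using this
  have hβ1 : 1 ≤ β := ob_pos hqa1
  have hge : D ≤ β + M := by omega
  have obsub : ∀ {z : ℕ}, M + 1 ≤ z → z - M ≡ z [MOD M] := by
    intro z hz
    have h0 : (z - M) + M ≡ (z - M) + 0 [MOD M] :=
      Nat.ModEq.add_left _ (Nat.modEq_zero_iff_dvd.mpr dvd_rfl)
    rw [Nat.add_zero, Nat.sub_add_cancel (by omega)] at h0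
    exact h0.symm
  have hqa2M : q * a' < 2 * M := by
    have e1 : q * a' ≤ q * (2 * q - 3) := Nat.mul_le_mul_left q (by omega)
    have e2 : q * (2 * q - 3) + 3 * q = 2 * q ^ 2 := by
      obtain ⟨u, rfl⟩ : ∃ u, q = u + 2 := ⟨q - 2, by omega⟩
      have e3 : (u + 2) * (2 * (u + 2) - 3) = (u + 2) * (2 * u + 1) := by
        rw [show 2 * (u + 2) - 3 = 2 * u + 1 by omega]
      have e4 : (u + 2) * (2 * u + 1) + 3 * (u + 2) = 2 * (u + 2) ^ 2 := by ring
      omega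
    omega
  have hβlt : β ≤ M - 1 := by
    rcases Nat.lt_or_ge (q * a') (M + 1) with hsmall | hbig
    · have : β = q * a' := ob_eq_self hqa1 (by omega) (by omega)
      -- exclude q * a' = M
      rcases Nat.lt_or_ge (q * a') M with h' | h'
      · omega
      · exfalso
        have hM' : q * a' = M := by omega
        have hdvd1 : q ∣ q * q - q * a' := Nat.dvd_sub ⟨q, rfl⟩ ⟨a', rfl⟩
        have : q * q - q * a' = 1 := by omega
        rw [this] at hdvd1
        have := Nat.le_of_dvd (by omega) hdvd1
        omega
    · -- M < q * a' < 2M : β = q * a' - M ≤ M - 1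
      have hne : ¬ M ∣ q * a' := by
        intro hdvd
        have := eq_of_dvd_lt hdvd (by omega) (by omega)
        omega
      have hbeta : β = q * a' - M := by
        refine Nat.ModEq.eq_of_lt_of_lt (hβmod.trans (obsub hbig).symm) ?_ (by omega)
        rcases Nat.lt_or_ge β M with h' | h'
        · exact h'
        · exfalso
          apply hne
          refine dvd_of_modEq hβmod.symm ?_
          have hβM : β = M := by omega
          rw [hβM]
      omega
  -- strictness : D < β + M
  have hstrict : D < β + M := by
    rcases Nat.lt_or_ge D (β + M) with h' | h'
    · exact h'
    · exfalso
      have heq : β = M - d := by omega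
      rcases Nat.lt_or_ge (q * a') (M + 1) with hsmall | hbig
      · have hβval : β = q * a' := ob_eq_self hqa1 (by omega) (by omega)
        -- q * a' = M - d  ⟹  q ∣ d + 1 ⟹ d = q - 1
        have hsum : q * a' + d + 1 = q * q := by omega
        have hdvd1 : q ∣ q * q - q * a' := Nat.dvd_sub ⟨q, rfl⟩ ⟨a', rfl⟩
        have e1 : q * q - q * a' = d + 1 := by omega
        rw [e1] at hdvd1
        obtain ⟨t, ht⟩ := hdvd1
        have ht1 : 1 ≤ t := Nat.pos_of_ne_zero (by rintro rfl; omega)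
        have ht2 : t < 2 := by
          by_contra hc
          push_neg at hc
          have : q * 2 ≤ q * t := Nat.mul_le_mul_left q hc
          omega
        have ht3 : t = 1 := by omega
        subst ht3
        rw [Nat.mul_one] at ht
        exact hd ⟨1, by omega⟩
      · -- β = q a' - M, so q a' = 2M - d = D ≤ q (d-1) : contradiction
        have hβval : β = q * a' - M := by
          refine Nat.ModEq.eq_of_lt_of_lt (hβmod.trans (obsub hbig).symm) ?_ (by omega)
          rcases Nat.lt_or_ge β M with h'' | h''
          · exact h''
          · exfalso
            have hβM2 : β = M := by omega
            have : M ∣ q * a' := dvd_of_modEq hβmod.symm (by rw [hβM2])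
            have := eq_of_dvd_lt this (by omega) (by omega)
            omega
        have hqa'D : q * a' = D := by omega
        have e1 : q * a' ≤ q * (d - 1) := Nat.mul_le_mul_left q (by omega)
        have e2 : q * (d - 1) + q = q * d := by
          have e2' : q * ((d - 1) + 1) = q * (d - 1) + q * 1 := Nat.mul_add q (d - 1) 1
          rw [Nat.sub_add_cancel (by omega)] at e2'
          omega
        have e3 : q * d ≤ q * (2 * q - 2) := Nat.mul_le_mul_left q (by omega)
        have e4 : q * (2 * q - 2) + 2 * q = 2 * q ^ 2 := by
          obtain ⟨u, rfl⟩ : ∃ u, q = u + 2 := ⟨q - 2, by omega⟩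
          have e5 : (u + 2) * (2 * (u + 2) - 2) = (u + 2) * (2 * u + 2) := by
            rw [show 2 * (u + 2) - 2 = 2 * u + 2 by omega]
          have e6 : (u + 2) * (2 * u + 2) + 2 * (u + 2) = 2 * (u + 2) ^ 2 := by ring
          omega
        omega
  -- the linear functional
  set rE : ℕ := ob (q ^ 2) (d + q * a') with hrE
  set sE : ℕ := M - β with hsE
  have hr1 : 1 ≤ rE := ob_pos (by omega)
  have hrN : rE ≤ M := by have := ob_le (N := q ^ 2) (z := d + q * a') (by omega); omega
  have hrmod : rE ≡ d + β [MOD M] := by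
    have e0 : rE ≡ d + q * a' [MOD M] := by
      have := ob_modEq (q ^ 2) (d + q * a'); simpa using this
    exact e0.trans (Nat.ModEq.add_left d hβmod.symm)
  have hs1 : 1 ≤ sE := by omega
  have hsM : sE ≤ M - 1 := by omega
  have hgexp : ∀ v : Fin 3 → F, eval v g
      = ∑ m ∈ g.support, coeff m g * (v 0 ^ m 0 * v 1 ^ m 1 * v 2 ^ m 2) := by
    intro v
    rw [eval_eq']
    exact Finset.sum_congr rfl fun m _ => by rw [Fin.prod_univ_three]
  have hdva : M ∣ q * a' + sE := by
    refine Nat.modEq_zero_iff_dvd.mp ?_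
    have e1 : q * a' + sE ≡ β + sE [MOD M] := Nat.ModEq.add_right _ hβmod.symm
    exact e1.trans (by rw [show β + sE = M by omega]; exact Nat.modEq_zero_iff_dvd.mpr ⟨1, by omega⟩)
  -- claim 1 : the functional kills ev g
  have hA1 : (∑ y : F, ∑ z : F, y ^ rE * z ^ sE * eval ![1,y,z] g)
      = ∑ m ∈ g.support, coeff m g *
          ((∑ y : F, y ^ (m 1 + rE)) * (∑ z : F, z ^ (m 2 + sE))) := by
    calc ∑ y : F, ∑ z : F, y ^ rE * z ^ sE * eval ![1,y,z] g
        = ∑ y : F, ∑ z : F, ∑ m ∈ g.support,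
            coeff m g * (y ^ (m 1 + rE) * z ^ (m 2 + sE)) := by
          refine Finset.sum_congr rfl fun y _ => Finset.sum_congr rfl fun z _ => ?_
          rw [hgexp, Finset.mul_sum]
          refine Finset.sum_congr rfl fun m _ => ?_
          have hv0 : (![1, y, z] : Fin 3 → F) 0 = 1 := rfl
          have hv1 : (![1, y, z] : Fin 3 → F) 1 = y := rfl
          have hv2 : (![1, y, z] : Fin 3 → F) 2 = z := rfl
          rw [hv0, hv1, hv2, one_pow, pow_add, pow_add]
          ring
      _ = ∑ y : F, ∑ m ∈ g.support, ∑ z : F,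
            coeff m g * (y ^ (m 1 + rE) * z ^ (m 2 + sE)) :=
          Finset.sum_congr rfl fun y _ => Finset.sum_comm
      _ = ∑ m ∈ g.support, ∑ y : F, ∑ z : F,
            coeff m g * (y ^ (m 1 + rE) * z ^ (m 2 + sE)) := Finset.sum_comm
      _ = ∑ m ∈ g.support, coeff m g *
            ((∑ y : F, y ^ (m 1 + rE)) * (∑ z : F, z ^ (m 2 + sE))) := by
          refine Finset.sum_congr rfl fun m _ => ?_
          rw [Finset.sum_mul_sum, Finset.mul_sum]
          exact Finset.sum_congr rfl fun y _ => by rw [Finset.mul_sum]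
  have hA2 : (∑ z : F, z ^ sE * eval ![0,1,z] g)
      = ∑ m ∈ g.support, coeff m g * ((0:F) ^ m 0 * ∑ z : F, z ^ (m 2 + sE)) := by
    calc ∑ z : F, z ^ sE * eval ![0,1,z] g
        = ∑ z : F, ∑ m ∈ g.support, coeff m g * ((0:F) ^ m 0 * z ^ (m 2 + sE)) := by
          refine Finset.sum_congr rfl fun z _ => ?_
          rw [hgexp, Finset.mul_sum]
          refine Finset.sum_congr rfl fun m _ => ?_
          have hv0 : (![0, 1, z] : Fin 3 → F) 0 = 0 := rfl
          have hv1 : (![0, 1, z] : Fin 3 → F) 1 = 1 := rfl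
          have hv2 : (![0, 1, z] : Fin 3 → F) 2 = z := rfl
          rw [hv0, hv1, hv2, one_pow, pow_add]
          ring
      _ = ∑ m ∈ g.support, ∑ z : F, coeff m g * ((0:F) ^ m 0 * z ^ (m 2 + sE)) :=
          Finset.sum_comm
      _ = ∑ m ∈ g.support, coeff m g * ((0:F) ^ m 0 * ∑ z : F, z ^ (m 2 + sE)) := by
          refine Finset.sum_congr rfl fun m _ => ?_
          rw [Finset.mul_sum, Finset.mul_sum]
  have claim1 : (∑ y : F, ∑ z : F, y ^ rE * z ^ sE * eval ![1,y,z] g)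
      + (∑ z : F, z ^ sE * eval ![0,1,z] g) = 0 := by
    rw [hA1, hA2, ← Finset.sum_add_distrib]
    refine Finset.sum_eq_zero fun m hm => ?_
    have hdeg : m 0 + m 1 + m 2 = D := by
      have hw := hg (mem_support_iff.mp hm)
      rw [weight_one_fin3] at hw
      omega
    by_cases hdvd : M ∣ (m 2 + sE)
    · have hm2 : m 2 = β := by
        have := eq_of_dvd_lt hdvd (by omega) (by omega)
        omega
      by_cases hm0 : m 0 = 0
      · have hry : M ∣ m 1 + rE := by
          refine Nat.modEq_zero_iff_dvd.mp ?_
          have e1 : m 1 + rE ≡ m 1 + (d + β) [MOD M] := Nat.ModEq.add_left _ hrmod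
          have e2 : m 1 + (d + β) = 2 * M := by omega
          exact e1.trans (by rw [e2]; exact Nat.modEq_zero_iff_dvd.mpr ⟨2, by ring⟩)
        rw [sumd (by omega) hry, sumd (by omega) hdvd, hm0, pow_zero]
        ring
      · have hnry : ¬ M ∣ m 1 + rE := by
          intro hcon
          have hDβ : M ∣ (D - β) + rE := by
            refine Nat.modEq_zero_iff_dvd.mp ?_
            have e1 : (D - β) + rE ≡ (D - β) + (d + β) [MOD M] := Nat.ModEq.add_left _ hrmod
            have e2 : (D - β) + (d + β) = 2 * M := by omega
            exact e1.trans (by rw [e2]; exact Nat.modEq_zero_iff_dvd.mpr ⟨2, by ring⟩)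
          have em := modEq_of_add_eq hcon hDβ
          have := Nat.ModEq.eq_of_lt_of_lt em (by omega) (by omega)
          omega
        rw [sumn hnry, sumd (by omega) hdvd, zero_pow hm0]
        ring
    · rw [sumn hdvd]
      ring
  -- claim 2 : the functional applied to (ev f)^q
  have hev1 : ∀ y z : F, eval (![1,y,z] : Fin 3 → F) g = (eval (![1,y,z] : Fin 3 → F) f) ^ q :=
    fun y z => hev ⟨![1,y,z], Or.inl rfl⟩
  have hev2 : ∀ z : F, eval (![0,1,z] : Fin 3 → F) g = (eval (![0,1,z] : Fin 3 → F) f) ^ q :=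
    fun z => hev ⟨![0,1,z], Or.inr (Or.inl ⟨rfl, rfl⟩)⟩
  have hB1 : (∑ y : F, ∑ z : F, y ^ rE * z ^ sE * eval ![1,y,z] g)
      = ∑ a₂ ∈ s, (lam a₂) ^ q *
          ((∑ y : F, y ^ (q * (d - a₂) + rE)) * (∑ z : F, z ^ (q * a₂ + sE))) := by
    calc ∑ y : F, ∑ z : F, y ^ rE * z ^ sE * eval ![1,y,z] g
        = ∑ y : F, ∑ z : F, ∑ a₂ ∈ s,
            (lam a₂) ^ q * (y ^ (q * (d - a₂) + rE) * z ^ (q * a₂ + sE)) := by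
          refine Finset.sum_congr rfl fun y _ => Finset.sum_congr rfl fun z _ => ?_
          rw [hev1, hfq, Finset.mul_sum]
          refine Finset.sum_congr rfl fun a₂ _ => ?_
          have hv1 : (![1, y, z] : Fin 3 → F) 1 = y := rfl
          have hv2 : (![1, y, z] : Fin 3 → F) 2 = z := rfl
          rw [hv1, hv2, pow_add, pow_add]
          ring
      _ = ∑ y : F, ∑ a₂ ∈ s, ∑ z : F,
            (lam a₂) ^ q * (y ^ (q * (d - a₂) + rE) * z ^ (q * a₂ + sE)) :=
          Finset.sum_congr rfl fun y _ => Finset.sum_comm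
      _ = ∑ a₂ ∈ s, ∑ y : F, ∑ z : F,
            (lam a₂) ^ q * (y ^ (q * (d - a₂) + rE) * z ^ (q * a₂ + sE)) := Finset.sum_comm
      _ = ∑ a₂ ∈ s, (lam a₂) ^ q *
            ((∑ y : F, y ^ (q * (d - a₂) + rE)) * (∑ z : F, z ^ (q * a₂ + sE))) := by
          refine Finset.sum_congr rfl fun a₂ _ => ?_
          rw [Finset.sum_mul_sum, Finset.mul_sum]
          exact Finset.sum_congr rfl fun y _ => by rw [Finset.mul_sum]
  have hB2 : (∑ z : F, z ^ sE * eval ![0,1,z] g)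
      = ∑ a₂ ∈ s, (lam a₂) ^ q * (∑ z : F, z ^ (q * a₂ + sE)) := by
    calc ∑ z : F, z ^ sE * eval ![0,1,z] g
        = ∑ z : F, ∑ a₂ ∈ s, (lam a₂) ^ q * z ^ (q * a₂ + sE) := by
          refine Finset.sum_congr rfl fun z _ => ?_
          rw [hev2, hfq, Finset.mul_sum]
          refine Finset.sum_congr rfl fun a₂ _ => ?_
          have hv1 : (![0, 1, z] : Fin 3 → F) 1 = 1 := rfl
          have hv2 : (![0, 1, z] : Fin 3 → F) 2 = z := rfl
          rw [hv1, hv2, one_pow, pow_add]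
          ring
      _ = ∑ a₂ ∈ s, ∑ z : F, (lam a₂) ^ q * z ^ (q * a₂ + sE) := Finset.sum_comm
      _ = ∑ a₂ ∈ s, (lam a₂) ^ q * (∑ z : F, z ^ (q * a₂ + sE)) := by
          exact Finset.sum_congr rfl fun a₂ _ => by rw [Finset.mul_sum]
  have hmem : a' ∈ s := by
    rw [hs]
    exact Finset.mem_filter.mpr ⟨Finset.mem_range.mpr (by omega), ha'd⟩
  have claim2 : (∑ y : F, ∑ z : F, y ^ rE * z ^ sE * eval ![1,y,z] g)
      + (∑ z : F, z ^ sE * eval ![0,1,z] g) = -(lam a' ^ q) := by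
    rw [hB1, hB2, ← Finset.sum_add_distrib]
    rw [Finset.sum_eq_single_of_mem a' hmem ?h0]
    case h0 =>
      intro a₂ ha₂ hne
      have hamem : a₂ < d := by
        rw [hs] at ha₂
        exact (Finset.mem_filter.mp ha₂).2
      have hnz : ¬ M ∣ q * a₂ + sE := by
        intro hcon
        have e := modEq_of_add_eq hcon hdva
        have e2 := cancel_q hM (by omega) e
        exact hne (Nat.ModEq.eq_of_lt_of_lt e2 (by omega) (by omega))
      rw [sumn hnz]
      ring
    · have hny : ¬ M ∣ q * (d - a') + rE := by
        intro hcon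
        have hsplit' : q * (d - a') + q * a' = q * d := by
          rw [← Nat.mul_add, Nat.sub_add_cancel ha'd.le]
        have hmulexp : d * (q + 1) = q * d + d := by ring
        have hXmod : q * (d - a') + rE ≡ d * (q + 1) [MOD M] := by
          have e1 : q * (d - a') + rE ≡ q * (d - a') + (d + β) [MOD M] :=
            Nat.ModEq.add_left _ hrmod
          have e2 : q * (d - a') + (d + β) ≡ q * (d - a') + (d + q * a') [MOD M] :=
            Nat.ModEq.add_left _ (Nat.ModEq.add_left _ hβmod)
          have e3 : q * (d - a') + (d + q * a') = d * (q + 1) := by omega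
          exact e1.trans (e2.trans (by rw [e3]))
        have hdd : M ∣ d * (q + 1) :=
          Nat.modEq_zero_iff_dvd.mp
            (hXmod.symm.trans (Nat.modEq_zero_iff_dvd.mpr hcon))
        have hMfac : M = (q + 1) * (q - 1) := by rw [hM, ← qsq_factor (by omega)]
        rw [hMfac, mul_comm d (q + 1)] at hdd
        exact hd ((Nat.mul_dvd_mul_iff_left (show 0 < q + 1 by omega)).mp hdd)
      rw [sumn hny, sumd (by omega) hdva]
      ring
  -- conclusion
  have hzero : lam a' ^ q = 0 := by
    have := claim1.symm.trans claim2
    have h0 : -(lam a' ^ q) = 0 := this.symm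
    exact neg_eq_zero.mp h0
  exact hl (pow_eq_zero_iff (by omega : q ≠ 0) |>.mp hzero)


theorem stmt12' {F : Type*} [Field F] [Fintype F] (q d : ℕ)
    (hq : Fintype.card F = q ^ 2) (h1 : 1 ≤ d) (h2 : d ≤ 2 * (q - 1))
    (lam : ℕ → F) (f : MvPolynomial (Fin 3) F)
    (hf : f = ∑ a₂ ∈ (Finset.range (q ^ 2)).filter (fun a₂ => a₂ < d),
        C (lam a₂) * X 1 ^ (d - a₂) * X 2 ^ a₂) :
    ev F f ∈ powq q (PRM F (2 * (q ^ 2 - 1) - d) : Set (stdRep F → F)) ↔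
      (d ≡ 0 [MOD q - 1] ∨
        {a₂ : ℕ | a₂ ≤ q ^ 2 - 1 ∧ a₂ < d ∧ lam a₂ ≠ 0} ⊆
          {a₂ : ℕ | a₂ ≤ q ^ 2 - 1 ∧ a₂ < d ∧
            ob (q ^ 2) (q * a₂) + (q ^ 2 - 1) < 2 * (q ^ 2 - 1) - d}) := by
  have hq2 : 2 ≤ q := by
    have hc : 1 < Fintype.card F := Fintype.one_lt_card
    by_contra h
    push_neg at h
    have := Nat.pow_le_pow_left (show q ≤ 1 by omega) 2
    omega
  rw [memb_iff q hq]
  constructor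
  · intro hex
    by_contra hcon
    push_neg at hcon
    obtain ⟨hdm, hset⟩ := hcon
    rw [Set.not_subset] at hset
    obtain ⟨a', ha', hnot⟩ := hset
    obtain ⟨ha1, ha2, ha3⟩ := ha'
    have hnT : ¬ (ob (q ^ 2) (q * a') + (q ^ 2 - 1) < 2 * (q ^ 2 - 1) - d) :=
      fun hlt => hnot ⟨ha1, ha2, hlt⟩
    have hd' : ¬ (q - 1) ∣ d := fun hdvd => hdm (Nat.modEq_zero_iff_dvd.mpr hdvd)
    obtain ⟨g, hg, hev⟩ := hex
    exact (necessity q d hq hq2 h1 h2 lam f hf hd' a' ha2 ha3 hnT g hg hev).elim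
  · intro hcase
    apply sufficiency q d hq hq2 h1 h2 lam f hf
    rcases hcase with hmod | hsub
    · exact Or.inl (Nat.modEq_zero_iff_dvd.mp hmod)
    · right
      intro a₂ hle hlt hne
      exact (hsub ⟨hle, hlt, hne⟩).2.2

end Plumbing
end Stmt12Aux

/-- for `f` supported on `A₂^d` with coefficients `λ_{d−a₂,a₂} = lam a₂`,
`ev(f) ∈ (PRM_{d^⊥}(q²,2))^q` iff `d ≡ 0 (mod q−1)` or `T_f ⊆ T`. -/
theorem stmt12 {F : Type*} [Field F] [Fintype F] (q d : ℕ)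
    (hq : Fintype.card F = q ^ 2) (h1 : 1 ≤ d) (h2 : d ≤ 2 * (q - 1))
    (lam : ℕ → F) (f : MvPolynomial (Fin 3) F)
    (hf : f = ∑ a₂ ∈ (Finset.range (q ^ 2)).filter (fun a₂ => a₂ < d),
        C (lam a₂) * X 1 ^ (d - a₂) * X 2 ^ a₂) :
    ev F f ∈ powq q (PRM F (2 * (q ^ 2 - 1) - d) : Set (stdRep F → F)) ↔
      (d ≡ 0 [MOD q - 1] ∨
        {a₂ : ℕ | a₂ ≤ q ^ 2 - 1 ∧ a₂ < d ∧ lam a₂ ≠ 0} ⊆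
          {a₂ : ℕ | a₂ ≤ q ^ 2 - 1 ∧ a₂ < d ∧
            ob (q ^ 2) (q * a₂) + (q ^ 2 - 1) < 2 * (q ^ 2 - 1) - d}) := by
  exact stmt12' q d hq h1 h2 lam f hf
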